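/- In the presented algebra A_{m,m}, for λ regular and any P ∈ DRem_0(λ), the generalized loop element squares to zero: L^λ_λ(-P)^2 = 0. -/

import Mathlib

namespace ArcPaper

/-- The content of a tile `(r, c)` (row `r`, column `c`, both `1`-indexed). -/
def cont (t : ℕ × ℕ) : ℤ := (t.1 : ℤ) - (t.2 : ℤ)

/-- `r + c - 1`, so that the height of the tile `(r, c)` in the `m × n` rectangle is
`lev t - m`. -/
def lev (t : ℕ × ℕ) : ℤ := (t.1 : ℤ) + (t.2 : ℤ) - 1

/-- The Young diagram of a partition `μ` (given as the function `r ↦ μ r`, `1`-indexed). -/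
def diagram (μ : ℕ → ℕ) : Set (ℕ × ℕ) := {t | 1 ≤ t.1 ∧ 1 ≤ t.2 ∧ t.2 ≤ μ t.1}

/-- A partition in the `m × n` rectangle: weakly decreasing, parts `≤ m`, at most `n` rows. -/
def IsPtn (m n : ℕ) (μ : ℕ → ℕ) : Prop :=
  (∀ i j, 1 ≤ i → i ≤ j → μ j ≤ μ i) ∧ μ 1 ≤ m ∧ ∀ r, n < r → μ r = 0

/-- One step of a path: the next tile is `(r+1, c)` or `(r, c-1)`. -/
def IsStep (a b : ℕ × ℕ) : Prop := b = (a.1 + 1, a.2) ∨ (2 ≤ a.2 ∧ b = (a.1, a.2 - 1))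

/-- `S` is the tile set of a (representative of a) Dyck path with first content `f`, last
content `l`, and height `h`, inside the `m × n` rectangle. -/
def IsDyckRep (m : ℕ) (S : Set (ℕ × ℕ)) (f l h : ℤ) : Prop :=
  ∃ (s : ℕ) (hs : 0 < s) (p : Fin s → ℕ × ℕ),
    Function.Injective p ∧ Set.range p = S ∧
    (∀ i : Fin s, ∀ hi : i.1 + 1 < s, IsStep (p i) (p ⟨i.1 + 1, hi⟩)) ∧
    (∀ i : Fin s, lev (p ⟨0, hs⟩) ≤ lev (p i)) ∧
    (∀ i : Fin s, lev (p ⟨s - 1, Nat.sub_lt hs Nat.one_pos⟩) ≤ lev (p i)) ∧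
    cont (p ⟨0, hs⟩) = f ∧ cont (p ⟨s - 1, Nat.sub_lt hs Nat.one_pos⟩) = l ∧
    lev (p ⟨0, hs⟩) - (m : ℤ) = h

/-- `ν` is obtained from `μ` by removing a Dyck path with contents `[f, l]` and height `h`. -/
def RemovesH (m n : ℕ) (μ : ℕ → ℕ) (f l h : ℤ) (ν : ℕ → ℕ) : Prop :=
  ∃ S : Set (ℕ × ℕ), IsDyckRep m S f l h ∧ S ⊆ diagram μ ∧ IsPtn m n ν ∧
    diagram ν = diagram μ \ S

/-- `ν` is obtained from `μ` by removing a Dyck path with contents `[f, l]`. -/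
def Removes (m n : ℕ) (μ : ℕ → ℕ) (f l : ℤ) (ν : ℕ → ℕ) : Prop :=
  ∃ h, RemovesH m n μ f l h ν

/-- The Dyck path with contents `[f, l]` is removable from `μ`, with height `h`. -/
def DRemH (m n : ℕ) (μ : ℕ → ℕ) (f l h : ℤ) : Prop := ∃ ν, RemovesH m n μ f l h ν

/-- The Dyck path with contents `[f, l]` is removable from `μ`. -/
def DRem (m n : ℕ) (μ : ℕ → ℕ) (f l : ℤ) : Prop := ∃ ν, Removes m n μ f l ν

/-- The Dyck path with contents `[f, l]` is addable to `μ`, with height `h`. -/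
def DAddH (m n : ℕ) (μ : ℕ → ℕ) (f l h : ℤ) : Prop :=
  ∃ ν, IsPtn m n ν ∧ RemovesH m n ν f l h μ

/-- The Dyck path with contents `[f, l]` is addable to `μ`. -/
def DAdd (m n : ℕ) (μ : ℕ → ℕ) (f l : ℤ) : Prop := ∃ h, DAddH m n μ f l h

/-- Two removable Dyck paths of `μ` commute: each remains removable after the other has been
removed. -/
def DyckCommute (m n : ℕ) (μ : ℕ → ℕ) (P Q : ℤ × ℤ) : Prop :=
  (∃ ν, Removes m n μ P.1 P.2 ν ∧ DRem m n ν Q.1 Q.2) ∧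
  (∃ ν, Removes m n μ Q.1 Q.2 ν ∧ DRem m n ν P.1 P.2)

/-- `P ≺ Q`: the Dyck path `Q` covers `P`, i.e. `first(Q) < first(P)` and
`last(P) < last(Q)`. -/
def DyckLt (P Q : ℤ × ℤ) : Prop := Q.1 < P.1 ∧ P.2 < Q.2

/-- Two Dyck paths (as content intervals) are adjacent: the disjoint union of their content
multisets is an interval. -/
def DyckAdj (P Q : ℤ × ℤ) : Prop := P.2 + 1 = Q.1 ∨ Q.2 + 1 = P.1

/-- Two Dyck paths (as content intervals) are distant: all their contents differ by `≥ 2`. -/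
def DyckDistant (P Q : ℤ × ℤ) : Prop := P.2 + 2 ≤ Q.1 ∨ Q.2 + 2 ≤ P.1

/-- The breadth `b(P) = (last(P) - first(P))/2 + 1` of a Dyck path. -/
def brN (P : ℤ × ℤ) : ℕ := ((P.2 - P.1) / 2 + 1).toNat

/-- A Dyck tiling of the skew shape `mu \ lam`: a finite set `T` of Dyck paths (identified by
their content intervals), together with a choice `S` of tile-set representatives, which
partition `mu \ lam` and are pairwise nested or distant. -/
def IsDyckTiling (m n : ℕ) (lam mu : ℕ → ℕ) (T : Finset (ℤ × ℤ))
    (S : ℤ × ℤ → Set (ℕ × ℕ)) : Prop :=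
  (∀ q ∈ T, ∃ h, IsDyckRep m (S q) q.1 q.2 h) ∧
  (∀ q ∈ T, ∀ q' ∈ T, q ≠ q' → Disjoint (S q) (S q')) ∧
  ((⋃ q ∈ T, S q) = diagram mu \ diagram lam) ∧
  (∀ q ∈ T, ∀ q' ∈ T, q ≠ q' → DyckLt q q' ∨ DyckLt q' q ∨ DyckDistant q q')

/-- The staircase partition `(d, d-1, …, 2, 1)` is contained in `μ`. -/
def HasStaircase (d : ℕ) (μ : ℕ → ℕ) : Prop := ∀ i, 1 ≤ i → i ≤ d → d + 1 - i ≤ μ i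

/-- `μ` has defect `d - m`: `d` is maximal with the staircase `(d, …, 1)` contained in `μ`. -/
def DefectIs (m : ℕ) (μ : ℕ → ℕ) (d : ℕ) : Prop :=
  HasStaircase d μ ∧ ¬ HasStaircase (d + 1) μ

/-- A regular partition of the `m × n` rectangle: a partition of defect `0`. -/
def Regular (m n : ℕ) (μ : ℕ → ℕ) : Prop := IsPtn m n μ ∧ DefectIs m μ m

/-- The conjugate partition: `conj n μ i` is the number of (the at most `n`) rows of `μ` with
at least `i` boxes. -/
def conj (n : ℕ) (μ : ℕ → ℕ) (i : ℕ) : ℕ := ((Finset.Icc 1 n).filter fun r => i ≤ μ r).card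

/-- Point `j ∈ {1, …, m+n}` of the weight of `μ` is labelled `∧`. -/
def IsUpPt (m n : ℕ) (μ : ℕ → ℕ) (j : ℤ) : Prop :=
  ∃ i : ℕ, 1 ≤ i ∧ i ≤ m ∧ j = (m : ℤ) + 1 - (i : ℤ) + (conj n μ i : ℤ)

/-- The number of `∧`-labelled points in positions `[a, b]` of the weight of `μ`. -/
noncomputable def upCount (m n : ℕ) (μ : ℕ → ℕ) (a b : ℤ) : ℕ :=
  {j : ℤ | a ≤ j ∧ j ≤ b ∧ IsUpPt m n μ j}.ncard

/-- The number of `∨`-labelled points in positions `[a, b]` of the weight of `μ`. -/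
noncomputable def downCount (m n : ℕ) (μ : ℕ → ℕ) (a b : ℤ) : ℕ :=
  {j : ℤ | a ≤ j ∧ j ≤ b ∧ ¬ IsUpPt m n μ j}.ncard

/-- `(i, j)` is a cup of the cup diagram `μ̲`: point `i` is `∨`, point `j` is `∧`, and the
points strictly between `i` and `j` form a balanced, completely matched configuration. -/
def IsCup (m n : ℕ) (μ : ℕ → ℕ) (i j : ℤ) : Prop :=
  1 ≤ i ∧ j ≤ (m : ℤ) + (n : ℤ) ∧ i < j ∧ ¬ IsUpPt m n μ i ∧ IsUpPt m n μ j ∧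
  upCount m n μ (i + 1) (j - 1) = downCount m n μ (i + 1) (j - 1) ∧
  ∀ k : ℤ, i < k → k < j → upCount m n μ (i + 1) k ≤ downCount m n μ (i + 1) k

/-- `R = rt(Q)`: the maximal-breadth element of the set of addable Dyck paths of `lam` of
height `1` lying strictly to the right of `Q`. -/
def IsRt (m n : ℕ) (lam : ℕ → ℕ) (Q R : ℤ × ℤ) : Prop :=
  DAddH m n lam R.1 R.2 1 ∧ Q.2 < R.1 ∧
  ∀ R' : ℤ × ℤ, DAddH m n lam R'.1 R'.2 1 → Q.2 < R'.1 → brN R' ≤ brN R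

/-- `R = ⟨P ∪ Q⟩_μ`: the smallest removable Dyck path of `μ` containing `P ∪ Q`. -/
def IsMerge (m n : ℕ) (μ : ℕ → ℕ) (P Q R : ℤ × ℤ) : Prop :=
  DRem m n μ R.1 R.2 ∧ R.1 ≤ P.1 ∧ P.2 ≤ R.2 ∧ R.1 ≤ Q.1 ∧ Q.2 ≤ R.2 ∧
  ∀ R' : ℤ × ℤ, DRem m n μ R'.1 R'.2 → R'.1 ≤ P.1 → P.2 ≤ R'.2 → R'.1 ≤ Q.1 → Q.2 ≤ R'.2 →
    R'.1 ≤ R.1 ∧ R.2 ≤ R'.2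

end ArcPaper

open ArcPaper
namespace Stmt18

open ArcPaper

/-- `Mf m lam k` = number of rows `j ∈ [1,m]` with `lam j - j ≥ -k`. -/
def Mf (m : ℕ) (lam : ℕ → ℕ) (k : ℤ) : ℕ :=
  ((Finset.Icc 1 m).filter fun j => -k ≤ (lam j : ℤ) - (j : ℤ)).card

lemma Mf_le_m (m : ℕ) (lam : ℕ → ℕ) (k : ℤ) : Mf m lam k ≤ m := by
  have h := Finset.card_filter_le (Finset.Icc 1 m) (fun j => -k ≤ (lam j : ℤ) - (j : ℤ))
  simpa [Mf, Nat.card_Icc] using h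

lemma Mf_mono (m : ℕ) (lam : ℕ → ℕ) {k k' : ℤ} (h : k ≤ k') : Mf m lam k ≤ Mf m lam k' := by
  apply Finset.card_le_card
  intro j hj
  simp only [Finset.mem_filter] at hj ⊢
  exact ⟨hj.1, le_trans (by omega) hj.2⟩

lemma lowerset_eq_Icc (F : Finset ℕ) (m : ℕ) (hsub : F ⊆ Finset.Icc 1 m)
    (hdc : ∀ j ∈ F, ∀ i, 1 ≤ i → i ≤ j → i ∈ F) : F = Finset.Icc 1 F.card := by
  have hsub2 : F ⊆ Finset.Icc 1 F.card := by
    intro j hj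
    by_contra hjn
    have h1 : 1 ≤ j := (Finset.mem_Icc.mp (hsub hj)).1
    have hcj : F.card < j := by
      simp only [Finset.mem_Icc, h1, true_and, not_le] at hjn
      exact hjn
    have hIcc : Finset.Icc 1 j ⊆ F := by
      intro i hi
      have := Finset.mem_Icc.mp hi
      exact hdc j hj i this.1 this.2
    have := Finset.card_le_card hIcc
    simp [Nat.card_Icc] at this
    omega
  exact Finset.eq_of_subset_of_card_le hsub2 (by simp [Nat.card_Icc])

lemma mem_Mf {m : ℕ} {lam : ℕ → ℕ} (hptn : IsPtn m m lam) (r : ℕ) (hr1 : 1 ≤ r)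
    (hrm : r ≤ m) (k : ℤ) : r ≤ Mf m lam k ↔ -k ≤ (lam r : ℤ) - (r : ℤ) := by
  set F := (Finset.Icc 1 m).filter fun j => -k ≤ (lam j : ℤ) - (j : ℤ) with hF
  have hdc : ∀ j ∈ F, ∀ i, 1 ≤ i → i ≤ j → i ∈ F := by
    intro j hj i hi1 hij
    simp only [hF, Finset.mem_filter, Finset.mem_Icc] at hj ⊢
    refine ⟨⟨hi1, le_trans hij hj.1.2⟩, ?_⟩
    have : lam j ≤ lam i := hptn.1 i j hi1 hij
    have : (lam j : ℤ) ≤ lam i := by exact_mod_cast this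
    omega
  have heq : F = Finset.Icc 1 F.card :=
    lowerset_eq_Icc F m (Finset.filter_subset _ _) hdc
  have hmem : r ∈ F ↔ -k ≤ (lam r : ℤ) - (r : ℤ) := by
    simp [hF, Finset.mem_filter, Finset.mem_Icc, hr1, hrm]
  rw [← hmem]
  constructor
  · intro h
    rw [heq]
    exact Finset.mem_Icc.mpr ⟨hr1, h⟩
  · intro h
    have : r ∈ Finset.Icc 1 F.card := heq ▸ h
    exact (Finset.mem_Icc.mp this).2

lemma Mf_step {m : ℕ} {lam : ℕ → ℕ} (hptn : IsPtn m m lam) (k : ℤ) :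
    Mf m lam (k + 1) ≤ Mf m lam k + 1 := by
  by_contra hc
  push_neg at hc
  have h2 : Mf m lam k + 2 ≤ Mf m lam (k+1) := by omega
  set j := Mf m lam k + 1 with hj
  have hjm : j + 1 ≤ m := le_trans h2 (Mf_le_m m lam (k+1))
  have hj1 : (j : ℕ) ≤ Mf m lam (k+1) := by omega
  have hjj : j + 1 ≤ Mf m lam (k+1) := by omega
  have e1 : -(k+1) ≤ (lam j : ℤ) - j :=
    (mem_Mf hptn j (by omega) (by omega) (k+1)).mp hj1
  have e2 : -(k+1) ≤ (lam (j+1) : ℤ) - (j+1 : ℕ) :=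
    (mem_Mf hptn (j+1) (by omega) (by omega) (k+1)).mp hjj
  have e3 : ¬ (-k ≤ (lam j : ℤ) - j) := by
    intro h
    have := (mem_Mf hptn j (by omega) (by omega) k).mpr h
    omega
  have hle : lam (j+1) ≤ lam j := hptn.1 j (j+1) (by omega) (by omega)
  have : ((lam (j+1) : ℤ)) ≤ lam j := by exact_mod_cast hle
  push_cast at e2
  omega

lemma Mf_add {m : ℕ} {lam : ℕ → ℕ} (hptn : IsPtn m m lam) (k : ℤ) (n : ℕ) :
    Mf m lam (k + n) ≤ Mf m lam k + n := by
  induction n with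
  | zero => simp
  | succ n ih =>
      have := Mf_step hptn (k + n)
      have : Mf m lam (k + n + 1) ≤ Mf m lam k + n + 1 := le_trans this (by omega)
      simpa [add_assoc] using this

lemma reg_bound {m : ℕ} {lam : ℕ → ℕ} (hlam : Regular m m lam) (k : ℤ)
    (hk : -(m : ℤ) ≤ k) (hk' : k ≤ m) : (m : ℤ) + k ≤ 2 * Mf m lam k := by
  rcases le_or_gt ((m:ℤ) + k) 0 with h | h
  · have := Mf m lam k; omega
  · -- choose r with 2r ≥ m+k, 2r ≤ m+k+1, 1 ≤ r ≤ m
    set r : ℕ := ((m + k + 1) / 2).toNat with hr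
    have hr2 : 2 * (r : ℤ) ≤ (m : ℤ) + k + 1 := by
      have h1 : 2 * (((m:ℤ) + k + 1) / 2) ≤ (m : ℤ) + k + 1 := by omega
      have h0 : (0:ℤ) ≤ ((m:ℤ) + k + 1) / 2 := by positivity
      rw [hr]
      push_cast [Int.toNat_of_nonneg h0]
      omega
    have hr3 : (m : ℤ) + k ≤ 2 * r := by
      have h1 : (m:ℤ) + k ≤ 2 * (((m:ℤ) + k + 1) / 2) := by omega
      have h0 : (0:ℤ) ≤ ((m:ℤ) + k + 1) / 2 := by positivity
      rw [hr]
      push_cast [Int.toNat_of_nonneg h0]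
      omega
    have hr1 : 1 ≤ r := by
      by_contra hh
      push_neg at hh
      interval_cases r <;> omega
    have hrm : r ≤ m := by
      by_contra hh
      push_neg at hh
      have : (m : ℤ) + 1 ≤ r := by exact_mod_cast hh
      omega
    have hst : (m : ℕ) + 1 - r ≤ lam r := hlam.2.1 r hr1 hrm
    have hst' : (m : ℤ) + 1 - r ≤ (lam r : ℤ) := by
      have : ((m + 1 - r : ℕ) : ℤ) ≤ (lam r : ℤ) := by exact_mod_cast hst
      push_cast [Nat.cast_sub (by omega : r ≤ m + 1)] at this
      omega
    have : -k ≤ (lam r : ℤ) - r := by omega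
    have := (mem_Mf hlam.1 r hr1 hrm k).mpr this
    have : (r : ℤ) ≤ Mf m lam k := by exact_mod_cast this
    omega

end Stmt18
namespace Stmt18

open ArcPaper

lemma tile_in_box {m : ℕ} {nu : ℕ → ℕ} (hptn : IsPtn m m nu) {t : ℕ × ℕ}
    (ht : t ∈ diagram nu) : t.1 ≤ m ∧ t.2 ≤ m := by
  obtain ⟨h1, h2, h3⟩ := ht
  constructor
  · by_contra hh
    push_neg at hh
    have := hptn.2.2 t.1 hh
    omega
  · have : nu t.1 ≤ nu 1 := hptn.1 1 t.1 le_rfl h1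
    have := hptn.2.1
    omega

lemma dyckrep_facts {m : ℕ} {S : Set (ℕ × ℕ)} {f l h : ℤ} (hrep : IsDyckRep m S f l h) :
    f ≤ l ∧ ∃ t ∈ S, cont t = l ∧ lev t = (m : ℤ) + h ∧
      (∀ t' ∈ S, cont t' ≤ l) ∧ (∀ t' ∈ S, cont t' = l → t' = t) := by
  obtain ⟨s, hs, p, hinj, hrange, hstep, hmin0, hminl, hcf, hcl, hlev⟩ := hrep
  have hcont : ∀ n (hn : n < s), cont (p ⟨n, hn⟩) = f + n := by
    intro n
    induction n with
    | zero => intro hn; simpa using hcf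
    | succ n ih =>
        intro hn
        have hn' : n < s := by omega
        have hst := hstep ⟨n, hn'⟩ hn
        have ihn := ih hn'
        rcases hst with h1 | h2
        · rw [h1]
          simp only [cont] at ihn ⊢
          push_cast
          push_cast at ihn
          omega
        · rw [h2.2]
          have h22 := h2.1
          simp only [cont] at ihn ⊢
          push_cast [Nat.cast_sub (by omega : 1 ≤ (p ⟨n, hn'⟩).2)]
          push_cast at ihn
          omega
  have hslt : s - 1 < s := Nat.sub_lt hs Nat.one_pos
  set t := p ⟨s - 1, hslt⟩ with ht
  have htS : t ∈ S := by rw [← hrange]; exact ⟨_, rfl⟩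
  have hlevt : lev t = (m : ℤ) + h := by
    have h1 := hmin0 ⟨s - 1, hslt⟩
    have h2 := hminl ⟨0, hs⟩
    have : lev t = lev (p ⟨0, hs⟩) := le_antisymm h2 h1
    omega
  have hlval : l = f + ((s : ℤ) - 1) := by
    have := hcont (s - 1) hslt
    rw [← hcl] at *
    rw [this]
    push_cast [Nat.cast_sub (by omega : 1 ≤ s)]
    ring
  have hcle : ∀ t' ∈ S, cont t' ≤ l := by
    intro t' ht'
    rw [← hrange] at ht'
    obtain ⟨i, hi⟩ := ht'
    have := hcont i.1 i.2
    rw [← hi] at *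
    rw [this, hlval]
    have : (i.1 : ℤ) ≤ (s : ℤ) - 1 := by
      have := i.2
      omega
    omega
  have huniq : ∀ t' ∈ S, cont t' = l → t' = t := by
    intro t' ht' hct'
    rw [← hrange] at ht'
    obtain ⟨i, hi⟩ := ht'
    have hci := hcont i.1 i.2
    rw [← hi] at hct'
    rw [hci, hlval] at hct'
    have : i.1 = s - 1 := by omega
    rw [← hi, ht]
    congr 1
    exact Fin.ext this
  refine ⟨by rw [hlval]; omega, t, htS, ?_, hlevt, hcle, huniq⟩
  · rw [hlval]
    have := hcont (s-1) hslt
    rw [this]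
    push_cast [Nat.cast_sub (by omega : 1 ≤ s)]
    ring

end Stmt18
namespace Stmt18

open ArcPaper

lemma rem0_last {m : ℕ} {lam : ℕ → ℕ} (hlam : Regular m m lam) {f l : ℤ}
    (hP : DRemH m m lam f l 0) :
    1 - (m : ℤ) ≤ l ∧ l ≤ (m : ℤ) - 1 ∧
      2 * (Mf m lam (l + 1) : ℤ) = (m : ℤ) + l + 1 := by
  obtain ⟨nu0, S, hrep, hsub, hptn0, hdiff⟩ := hP
  obtain ⟨hfl, t, htS, hct, hlt, hcle, huniq⟩ := dyckrep_facts hrep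
  have htlam : t ∈ diagram lam := hsub htS
  obtain ⟨hr1, hc1, hclam⟩ := htlam
  obtain ⟨hrm, hcm⟩ := tile_in_box hlam.1 (hsub htS)
  simp only [cont] at hct
  simp only [lev] at hlt
  have hrc : (t.1 : ℤ) + t.2 = m + 1 := by omega
  refine ⟨by omega, by omega, ?_⟩
  have hMge : t.1 ≤ Mf m lam (l + 1) := by
    rw [mem_Mf hlam.1 t.1 hr1 hrm]
    have : (t.2 : ℤ) ≤ lam t.1 := by exact_mod_cast hclam
    omega
  have hMle : Mf m lam (l + 1) ≤ t.1 := by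
    by_contra hh
    push_neg at hh
    have hr1m : t.1 + 1 ≤ m := le_trans hh (Mf_le_m m lam (l+1))
    have : t.1 + 1 ≤ Mf m lam (l+1) := hh
    have hmem := (mem_Mf hlam.1 (t.1 + 1) (by omega) hr1m (l+1)).mp this
    push_cast at hmem
    have hin : ((t.1 + 1, t.2) : ℕ × ℕ) ∈ diagram lam := by
      refine ⟨by omega, hc1, ?_⟩
      have : (t.2 : ℤ) ≤ (lam (t.1+1) : ℤ) := by omega
      exact_mod_cast this
    have hnotS : ((t.1 + 1, t.2) : ℕ × ℕ) ∉ S := by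
      intro hmemS
      have := hcle _ hmemS
      simp only [cont] at this
      push_cast at this
      omega
    have hin0 : ((t.1 + 1, t.2) : ℕ × ℕ) ∈ diagram nu0 := by
      rw [hdiff]; exact ⟨hin, hnotS⟩
    have hle0 : nu0 (t.1 + 1) ≤ nu0 t.1 := hptn0.1 t.1 (t.1+1) hr1 (by omega)
    have ht0 : t ∈ diagram nu0 := by
      refine ⟨hr1, hc1, ?_⟩
      have h22 : t.2 ≤ nu0 (t.1 + 1) := hin0.2.2
      omega
    rw [hdiff] at ht0
    exact ht0.2 htS
  have : (Mf m lam (l+1) : ℤ) = t.1 := by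
    exact_mod_cast le_antisymm hMle hMge
  omega

lemma add1_last {m : ℕ} {lam : ℕ → ℕ} (hlam : Regular m m lam) {a b : ℤ}
    (h : DAddH m m lam a b 1) :
    a ≤ b ∧ b ≤ (m : ℤ) - 1 ∧ 2 * (Mf m lam b : ℤ) = (m : ℤ) + b := by
  obtain ⟨nu', hptn', S, hrep, hsub, hlampt, hdiff⟩ := h
  obtain ⟨hfl, t, htS, hct, hlt, hcle, huniq⟩ := dyckrep_facts hrep
  have htnu : t ∈ diagram nu' := hsub htS
  obtain ⟨hr1, hc1, hcnu⟩ := htnu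
  obtain ⟨hrm, hcm⟩ := tile_in_box hptn' (hsub htS)
  simp only [cont] at hct
  simp only [lev] at hlt
  have hrc : (t.1 : ℤ) + t.2 = m + 2 := by omega
  have hc2 : 2 ≤ t.2 := by
    have : (t.1 : ℤ) ≤ m := by exact_mod_cast hrm
    omega
  have hr2 : 2 ≤ t.1 := by
    have : (t.2 : ℤ) ≤ m := by exact_mod_cast hcm
    omega
  have hbm : b ≤ (m : ℤ) - 1 := by
    have : (t.1 : ℤ) ≤ m := by exact_mod_cast hrm
    omega
  refine ⟨hfl, hbm, ?_⟩
  have htnotlam : t ∉ diagram lam := by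
    intro hh
    rw [hdiff] at hh
    exact hh.2 htS
  have hlamlt : (lam t.1 : ℤ) < t.2 := by
    by_contra hh
    push_neg at hh
    exact htnotlam ⟨hr1, hc1, by exact_mod_cast hh⟩
  have hMle : Mf m lam b ≤ t.1 - 1 := by
    by_contra hh
    push_neg at hh
    have : t.1 ≤ Mf m lam b := by omega
    have := (mem_Mf hlam.1 t.1 hr1 hrm b).mp this
    omega
  have hprev : ((t.1 - 1, t.2 - 1) : ℕ × ℕ) ∈ diagram lam := by
    have hnu : ((t.1 - 1, t.2 - 1) : ℕ × ℕ) ∈ diagram nu' := by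
      refine ⟨by omega, by omega, ?_⟩
      show t.2 - 1 ≤ nu' (t.1 - 1)
      have : nu' t.1 ≤ nu' (t.1 - 1) := hptn'.1 (t.1 - 1) t.1 (by omega) (by omega)
      omega
    have hnotS : ((t.1 - 1, t.2 - 1) : ℕ × ℕ) ∉ S := by
      intro hmemS
      have hcc : cont ((t.1 - 1, t.2 - 1) : ℕ × ℕ) = b := by
        simp only [cont]
        push_cast [Nat.cast_sub (by omega : 1 ≤ t.1), Nat.cast_sub (by omega : 1 ≤ t.2)]
        omega
      have := huniq _ hmemS hcc
      have h1 : t.1 - 1 = t.1 := congrArg Prod.fst this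
      omega
    rw [hdiff]
    exact ⟨hnu, hnotS⟩
  have hMge : t.1 - 1 ≤ Mf m lam b := by
    have hmem : t.2 - 1 ≤ lam (t.1 - 1) := hprev.2.2
    rw [mem_Mf hlam.1 (t.1 - 1) (by omega) (by omega) b]
    have hcast : ((t.2 - 1 : ℕ) : ℤ) ≤ (lam (t.1 - 1) : ℤ) := by exact_mod_cast hmem
    have e1 : ((t.1 - 1 : ℕ) : ℤ) = (t.1 : ℤ) - 1 := Nat.cast_sub (by omega)
    have e2 : ((t.2 - 1 : ℕ) : ℤ) = (t.2 : ℤ) - 1 := Nat.cast_sub (by omega)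
    omega
  have heq : (Mf m lam b : ℤ) = (t.1 : ℤ) - 1 := by
    have h0 : Mf m lam b = t.1 - 1 := le_antisymm hMle hMge
    have e1 : ((t.1 - 1 : ℕ) : ℤ) = (t.1 : ℤ) - 1 := Nat.cast_sub (by omega)
    rw [h0, e1]
  omega

end Stmt18
namespace Stmt18

open ArcPaper

lemma row_struct {m : ℕ} {lam : ℕ → ℕ} (hlam : Regular m m lam) {a b : ℤ}
    (hab : a ≤ b) (ham : 2 - (m : ℤ) ≤ a) (hbm : b ≤ (m : ℤ) - 2)
    (hZb : 2 * (Mf m lam b : ℤ) = m + b) (r : ℕ)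
    (hne : ((Finset.Icc a b).filter fun k => Mf m lam k + 1 = r).Nonempty) :
    ∃ k1 k2 : ℤ, a ≤ k1 ∧ k1 ≤ k2 ∧ k2 ≤ b ∧ 1 ≤ r ∧ r ≤ m ∧
      (∀ k : ℤ, k ∈ (Finset.Icc a b).filter (fun k => Mf m lam k + 1 = r) ↔
        (k1 ≤ k ∧ k ≤ k2)) ∧
      Mf m lam k1 + 1 = r ∧
      ((lam r : ℤ) = (r : ℤ) - 1 - k2) ∧
      ((((Finset.Icc a b).filter fun k => Mf m lam k + 1 = r).card : ℤ) = k2 - k1 + 1) := by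
  classical
  set F := (Finset.Icc a b).filter (fun k => Mf m lam k + 1 = r) with hF
  set k1 := F.min' hne with hk1
  set k2 := F.max' hne with hk2
  have hk1F : k1 ∈ F := F.min'_mem hne
  have hk2F : k2 ∈ F := F.max'_mem hne
  have hk1m : k1 ∈ Finset.Icc a b ∧ Mf m lam k1 + 1 = r := by
    simpa [hF, Finset.mem_filter] using hk1F
  have hk2m : k2 ∈ Finset.Icc a b ∧ Mf m lam k2 + 1 = r := by
    simpa [hF, Finset.mem_filter] using hk2F
  have hk1ab := Finset.mem_Icc.mp hk1m.1
  have hk2ab := Finset.mem_Icc.mp hk2m.1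
  have hk12 : k1 ≤ k2 := F.min'_le _ hk2F
  have hr1 : 1 ≤ r := by omega
  have hMbub : (Mf m lam b : ℤ) ≤ (m : ℤ) - 1 := by omega
  have hMk1b : Mf m lam k1 ≤ Mf m lam b := Mf_mono m lam hk1ab.2
  have hrm : r ≤ m := by
    have : (Mf m lam k1 : ℤ) ≤ Mf m lam b := by exact_mod_cast hMk1b
    omega
  have hiff : ∀ k : ℤ, k ∈ F ↔ (k1 ≤ k ∧ k ≤ k2) := by
    intro k
    constructor
    · intro hk
      exact ⟨F.min'_le _ hk, F.le_max' _ hk⟩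
    · rintro ⟨h1, h2⟩
      have hMk : Mf m lam k + 1 = r := by
        have e1 : Mf m lam k1 ≤ Mf m lam k := Mf_mono m lam h1
        have e2 : Mf m lam k ≤ Mf m lam k2 := Mf_mono m lam h2
        omega
      simp only [hF, Finset.mem_filter, Finset.mem_Icc]
      exact ⟨⟨le_trans hk1ab.1 h1, le_trans h2 hk2ab.2⟩, hMk⟩
  -- next-diagonal bound
  have hnext : r ≤ Mf m lam (k2 + 1) := by
    rcases eq_or_lt_of_le hk2ab.2 with heq | hlt
    · -- k2 = b
      have hreg := reg_bound hlam (b + 1) (by omega) (by omega)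
      have : (Mf m lam k2 : ℤ) + 1 ≤ Mf m lam (b+1) := by
        rw [heq]; omega
      have hrr : (r : ℤ) ≤ Mf m lam (b + 1) := by
        have : (Mf m lam k2 : ℤ) + 1 = r := by exact_mod_cast hk2m.2
        omega
      rw [heq]
      exact_mod_cast hrr
    · have h1 : Mf m lam k2 ≤ Mf m lam (k2 + 1) := Mf_mono m lam (by omega)
      rcases Nat.lt_or_ge (Mf m lam (k2+1)) r with hh | hh
      · exfalso
        have : Mf m lam (k2 + 1) + 1 = r := by omega
        have : k2 + 1 ∈ F := by
          simp only [hF, Finset.mem_filter, Finset.mem_Icc]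
          exact ⟨⟨by omega, by omega⟩, this⟩
        have := F.le_max' _ this
        omega
      · exact hh
  have hlamub : (lam r : ℤ) - r < -k2 := by
    have : ¬ (r ≤ Mf m lam k2) := by omega
    rw [mem_Mf hlam.1 r hr1 hrm k2] at this
    omega
  have hlamlb : -(k2 + 1) ≤ (lam r : ℤ) - r := by
    rw [← mem_Mf hlam.1 r hr1 hrm (k2 + 1)]
    exact hnext
  have hlamr : (lam r : ℤ) = (r : ℤ) - 1 - k2 := by omega
  have hcard : ((F.card : ℕ) : ℤ) = k2 - k1 + 1 := by
    have hFeq : F = Finset.Icc k1 k2 := by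
      apply Finset.ext
      intro k
      rw [hiff k, Finset.mem_Icc]
    rw [hFeq, Int.card_Icc]
    omega
  exact ⟨k1, k2, hk1ab.1, hk12, hk2ab.2, hr1, hrm, hiff, hk1m.2, hlamr, hcard⟩

end Stmt18
namespace Stmt18

open ArcPaper

lemma construct_rep {m : ℕ} {lam : ℕ → ℕ} (hlam : Regular m m lam) {a b : ℤ}
    (hab : a ≤ b) (ham : 2 - (m : ℤ) ≤ a) (hbm : b ≤ (m : ℤ) - 2)
    (hZa : 2 * (Mf m lam a : ℤ) = m + a) (hZb : 2 * (Mf m lam b : ℤ) = m + b)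
    (nu : ℕ → ℕ) (hlamle : ∀ r, lam r ≤ nu r)
    (mem_nu : ∀ r c : ℕ, 1 ≤ c → ((c ≤ nu r) ↔ (c ≤ lam r ∨
      ∃ k : ℤ, a ≤ k ∧ k ≤ b ∧ (Mf m lam k : ℤ) + 1 = r ∧
        (c : ℤ) = (Mf m lam k : ℤ) + 1 - k))) :
    RemovesH m m nu a b 1 lam := by
  classical
  have hreg : ∀ k : ℤ, a ≤ k → k ≤ b → (m : ℤ) + k ≤ 2 * Mf m lam k := by
    intro k h1 h2
    exact reg_bound hlam k (by omega) (by omega)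
  have hMbub : (Mf m lam b : ℤ) ≤ (m : ℤ) - 1 := by omega
  have hMub : ∀ k : ℤ, a ≤ k → k ≤ b → (Mf m lam k : ℤ) ≤ (m : ℤ) - 1 := by
    intro k h1 h2
    have h3 := Mf_mono m lam h2 (k' := b)
    have : (Mf m lam k : ℤ) ≤ Mf m lam b := by exact_mod_cast h3
    omega
  -- the tile function
  set q : ℤ → ℕ × ℕ := fun k => (Mf m lam k + 1, ((Mf m lam k : ℤ) + 1 - k).toNat)
    with hq
  have hcol : ∀ k : ℤ, a ≤ k → k ≤ b → 2 ≤ (Mf m lam k : ℤ) + 1 - k := by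
    intro k h1 h2
    have := hreg k h1 h2
    omega
  have hqcol : ∀ k : ℤ, a ≤ k → k ≤ b → ((q k).2 : ℤ) = (Mf m lam k : ℤ) + 1 - k := by
    intro k h1 h2
    simp only [hq]
    rw [Int.toNat_of_nonneg (by have := hcol k h1 h2; omega)]
  have hqrow : ∀ k : ℤ, (q k).1 = Mf m lam k + 1 := fun k => rfl
  have hcontq : ∀ k : ℤ, a ≤ k → k ≤ b → cont (q k) = k := by
    intro k h1 h2
    simp only [cont]
    rw [hqcol k h1 h2, hqrow]
    push_cast
    ring
  have hlevq : ∀ k : ℤ, a ≤ k → k ≤ b → lev (q k) = 2 * (Mf m lam k : ℤ) + 1 - k := by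
    intro k h1 h2
    simp only [lev]
    rw [hqcol k h1 h2, hqrow]
    push_cast
    ring
  have hlevge : ∀ k : ℤ, a ≤ k → k ≤ b → (m : ℤ) + 1 ≤ lev (q k) := by
    intro k h1 h2
    rw [hlevq k h1 h2]
    have := hreg k h1 h2
    omega
  have hleva : lev (q a) = (m : ℤ) + 1 := by
    rw [hlevq a le_rfl hab]
    omega
  have hlevb : lev (q b) = (m : ℤ) + 1 := by
    rw [hlevq b hab le_rfl]
    omega
  have hstepq : ∀ k : ℤ, a ≤ k → k + 1 ≤ b → IsStep (q k) (q (k + 1)) := by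
    intro k h1 h2
    have hm1 : Mf m lam k ≤ Mf m lam (k + 1) := Mf_mono m lam (by omega)
    have hm2 : Mf m lam (k + 1) ≤ Mf m lam k + 1 := Mf_step hlam.1 k
    rcases Nat.lt_or_ge (Mf m lam k) (Mf m lam (k + 1)) with hcase | hcase
    · -- down step
      left
      have heqM : Mf m lam (k + 1) = Mf m lam k + 1 := by omega
      have hrow : (q (k + 1)).1 = (q k).1 + 1 := by
        rw [hqrow, hqrow, heqM]
      have hcol2 : (q (k + 1)).2 = (q k).2 := by
        have e1 := hqcol (k + 1) (by omega) h2
        have e2 := hqcol k h1 (by omega)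
        have heqM' : (Mf m lam (k + 1) : ℤ) = (Mf m lam k : ℤ) + 1 := by
          exact_mod_cast heqM
        have : ((q (k + 1)).2 : ℤ) = ((q k).2 : ℤ) := by omega
        exact_mod_cast this
      exact Prod.ext hrow hcol2
    · -- left step
      right
      have heqM : Mf m lam (k + 1) = Mf m lam k := by omega
      have e1 := hqcol (k + 1) (by omega) h2
      have e2 := hqcol k h1 (by omega)
      have hc2 : 2 ≤ (q k).2 := by
        have := hcol k h1 (by omega)
        omega
      refine ⟨hc2, ?_⟩
      have hrow : (q (k + 1)).1 = (q k).1 := by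
        rw [hqrow, hqrow, heqM]
      have hcol2 : (q (k + 1)).2 = (q k).2 - 1 := by
        have heqM' : (Mf m lam (k + 1) : ℤ) = (Mf m lam k : ℤ) := by
          exact_mod_cast heqM
        have e3 : (((q k).2 - 1 : ℕ) : ℤ) = ((q k).2 : ℤ) - 1 := by
          rw [Nat.cast_sub (by omega : 1 ≤ (q k).2)]
          push_cast
          ring
        have : ((q (k + 1)).2 : ℤ) = (((q k).2 - 1 : ℕ) : ℤ) := by omega
        exact_mod_cast this
      exact Prod.ext hrow hcol2
  set S : Set (ℕ × ℕ) := {t | ∃ k : ℤ, a ≤ k ∧ k ≤ b ∧ t = q k} with hS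
  -- the enumeration
  set s : ℕ := (b - a).toNat + 1 with hsdef
  have hs : 0 < s := Nat.succ_pos _
  have hik : ∀ i : Fin s, a ≤ a + (i.1 : ℤ) ∧ a + (i.1 : ℤ) ≤ b := by
    intro i
    have h2 := i.2
    have : (i.1 : ℤ) ≤ ((b - a).toNat : ℤ) := by exact_mod_cast Nat.lt_succ_iff.mp h2
    rw [Int.toNat_of_nonneg (by omega)] at this
    omega
  set p : Fin s → ℕ × ℕ := fun i => q (a + (i.1 : ℤ)) with hp
  have hcontp : ∀ i : Fin s, cont (p i) = a + (i.1 : ℤ) := by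
    intro i
    exact hcontq _ (hik i).1 (hik i).2
  have hinj : Function.Injective p := by
    intro i j hij
    have : cont (p i) = cont (p j) := by rw [hij]
    rw [hcontp i, hcontp j] at this
    have : (i.1 : ℤ) = j.1 := by omega
    exact Fin.ext (by exact_mod_cast this)
  have hrange : Set.range p = S := by
    apply Set.ext
    intro t
    constructor
    · rintro ⟨i, rfl⟩
      exact ⟨a + (i.1 : ℤ), (hik i).1, (hik i).2, rfl⟩
    · rintro ⟨k, h1, h2, rfl⟩
      refine ⟨⟨(k - a).toNat, ?_⟩, ?_⟩
      · have : ((k - a).toNat : ℤ) ≤ ((b - a).toNat : ℤ) := by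
          rw [Int.toNat_of_nonneg (by omega), Int.toNat_of_nonneg (by omega)]
          omega
        have : (k - a).toNat ≤ (b - a).toNat := by exact_mod_cast this
        omega
      · simp only [hp]
        congr 1
        rw [Int.toNat_of_nonneg (by omega)]
        ring
  have hlast : (⟨s - 1, Nat.sub_lt hs Nat.one_pos⟩ : Fin s) = ⟨(b - a).toNat, by omega⟩ := by
    congr 1
  have hplast : p ⟨s - 1, Nat.sub_lt hs Nat.one_pos⟩ = q b := by
    rw [hlast]
    simp only [hp]
    congr 1
    rw [Int.toNat_of_nonneg (by omega)]
    ring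
  have hp0 : p ⟨0, hs⟩ = q a := by
    simp only [hp]
    congr 1
    simp
  have hrep : IsDyckRep m S a b 1 := by
    refine ⟨s, hs, p, hinj, hrange, ?_, ?_, ?_, ?_, ?_, ?_⟩
    · intro i hi
      have h1 := (hik i).1
      have h2 : a + (i.1 : ℤ) + 1 ≤ b := by
        have : ((i.1 + 1 : ℕ) : ℤ) ≤ ((b - a).toNat : ℤ) := by
          exact_mod_cast Nat.lt_succ_iff.mp hi
        rw [Int.toNat_of_nonneg (by omega)] at this
        push_cast at this
        omega
      have := hstepq (a + (i.1 : ℤ)) h1 h2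
      have he : (p ⟨i.1 + 1, hi⟩) = q (a + (i.1 : ℤ) + 1) := by
        simp only [hp]
        congr 1
        push_cast
        ring
      rw [he]
      exact this
    · intro i
      rw [hp0, hleva]
      exact hlevge _ (hik i).1 (hik i).2
    · intro i
      rw [hplast, hlevb]
      exact hlevge _ (hik i).1 (hik i).2
    · rw [hp0]
      rw [hcontq a le_rfl hab]
    · rw [hplast]
      rw [hcontq b hab le_rfl]
    · rw [hp0, hleva]
      ring
  -- S inside nu, disjoint from lam
  have hSnu : S ⊆ diagram nu := by
    rintro t ⟨k, h1, h2, rfl⟩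
    have hc1 : 1 ≤ (q k).2 := by
      have := hqcol k h1 h2
      have := hcol k h1 h2
      omega
    refine ⟨by rw [hqrow]; omega, hc1, ?_⟩
    rw [mem_nu (q k).1 (q k).2 hc1]
    right
    refine ⟨k, h1, h2, ?_, ?_⟩
    · rw [hqrow]
      push_cast
      ring
    · exact hqcol k h1 h2
  have hSlam : ∀ t ∈ S, t ∉ diagram lam := by
    rintro t ⟨k, h1, h2, rfl⟩ ⟨hh1, hh2, hh3⟩
    have hrm : (q k).1 ≤ m := by
      have := hMub k h1 h2
      rw [hqrow]
      omega
    have := (mem_Mf hlam.1 (q k).1 hh1 hrm k).mpr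
    have hcl : ((q k).2 : ℤ) ≤ (lam (q k).1 : ℤ) := by exact_mod_cast hh3
    rw [hqcol k h1 h2] at hcl
    rw [hqrow] at *
    have hle : Mf m lam k + 1 ≤ Mf m lam k := by
      apply this
      push_cast
      omega
    omega
  have hdiag : diagram lam = diagram nu \ S := by
    apply Set.ext
    rintro ⟨r, c⟩
    constructor
    · rintro ⟨h1, h2, h3⟩
      refine ⟨⟨h1, h2, le_trans h3 (hlamle r)⟩, ?_⟩
      intro hmem
      exact hSlam _ hmem ⟨h1, h2, h3⟩
    · rintro ⟨⟨h1, h2, h3⟩, hnotS⟩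
      refine ⟨h1, h2, ?_⟩
      rcases (mem_nu r c h2).mp h3 with h | ⟨k, hka, hkb, hMk, hck⟩
      · exact h
      · exfalso
        apply hnotS
        refine ⟨k, hka, hkb, ?_⟩
        have hr : r = Mf m lam k + 1 := by exact_mod_cast hMk.symm
        have hc : c = ((Mf m lam k : ℤ) + 1 - k).toNat := by
          have : (c : ℤ) = ((((Mf m lam k : ℤ) + 1 - k).toNat : ℕ) : ℤ) := by
            rw [Int.toNat_of_nonneg (by have := hcol k hka hkb; omega)]
            exact hck
          exact_mod_cast this
        rw [hq]
        exact Prod.ext hr hc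
  exact ⟨S, hrep, hSnu, hlam.1, hdiag⟩

end Stmt18
namespace Stmt18

open ArcPaper

lemma construct {m : ℕ} {lam : ℕ → ℕ} (hlam : Regular m m lam) {a b : ℤ}
    (hab : a ≤ b) (ham : 2 - (m : ℤ) ≤ a) (hbm : b ≤ (m : ℤ) - 2)
    (hZa : 2 * (Mf m lam a : ℤ) = m + a) (hZb : 2 * (Mf m lam b : ℤ) = m + b) :
    ∃ nu, Regular m m nu ∧ RemovesH m m nu a b 1 lam := by
  classical
  set cnt : ℕ → ℕ :=
    fun r => ((Finset.Icc a b).filter fun k => Mf m lam k + 1 = r).card with hcnt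
  set nu : ℕ → ℕ := fun r => lam r + cnt r with hnu
  have hreg : ∀ k : ℤ, a ≤ k → k ≤ b → (m : ℤ) + k ≤ 2 * Mf m lam k := by
    intro k h1 h2
    exact reg_bound hlam k (by omega) (by omega)
  have hMbub : (Mf m lam b : ℤ) ≤ (m : ℤ) - 1 := by omega
  have hMub : ∀ k : ℤ, a ≤ k → k ≤ b → (Mf m lam k : ℤ) ≤ (m : ℤ) - 1 := by
    intro k h1 h2
    have := Mf_mono m lam h2 (k' := b)
    have : (Mf m lam k : ℤ) ≤ Mf m lam b := by exact_mod_cast this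
    omega
  have hMpos : ∀ k : ℤ, a ≤ k → k ≤ b → 1 ≤ Mf m lam k := by
    intro k h1 h2
    have h3 := hreg k h1 h2
    have h4 : (1 : ℤ) ≤ (Mf m lam k : ℤ) := by omega
    exact_mod_cast h4
  have hlamle : ∀ r, lam r ≤ nu r := by
    intro r; simp [hnu]
  -- membership characterization for nu
  have mem_nu : ∀ r c : ℕ, 1 ≤ c → ((c ≤ nu r) ↔ (c ≤ lam r ∨
      ∃ k : ℤ, a ≤ k ∧ k ≤ b ∧ (Mf m lam k : ℤ) + 1 = r ∧
        (c : ℤ) = (Mf m lam k : ℤ) + 1 - k)) := by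
    intro r c hc
    by_cases hne : ((Finset.Icc a b).filter fun k => Mf m lam k + 1 = r).Nonempty
    · obtain ⟨k1, k2, hk1a, hk12, hk2b, hr1, hrm, hiff, hMk1, hlamr, hcard⟩ :=
        row_struct hlam hab ham hbm hZb r hne
      have hnur : (nu r : ℤ) = (r : ℤ) - k1 := by
        have e1 : ((cnt r : ℕ) : ℤ) = k2 - k1 + 1 := by simp only [hcnt]; exact hcard
        have e2 : (nu r : ℤ) = (lam r : ℤ) + (cnt r : ℤ) := by
          simp only [hnu]; push_cast; ring
        omega
      constructor
      · intro hcnu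
        rcases le_or_gt c (lam r) with h | h
        · exact Or.inl h
        · right
          have h1 : (lam r : ℤ) < c := by exact_mod_cast h
          have h2 : (c : ℤ) ≤ (nu r : ℤ) := by exact_mod_cast hcnu
          have hk : k1 ≤ (r : ℤ) - c ∧ (r : ℤ) - c ≤ k2 := by omega
          have hmem := (hiff _).mpr hk
          simp only [Finset.mem_filter, Finset.mem_Icc] at hmem
          have hMeq : (Mf m lam ((r : ℤ) - c) : ℤ) + 1 = r := by exact_mod_cast hmem.2
          exact ⟨(r : ℤ) - c, hmem.1.1, hmem.1.2, hMeq, by omega⟩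
      · rintro (h | ⟨k, hka, hkb, hMk, hck⟩)
        · exact le_trans h (hlamle r)
        · have hkF : k ∈ (Finset.Icc a b).filter fun k => Mf m lam k + 1 = r := by
            simp only [Finset.mem_filter, Finset.mem_Icc]
            exact ⟨⟨hka, hkb⟩, by exact_mod_cast hMk⟩
          have hk1k := ((hiff k).mp hkF).1
          have : (c : ℤ) ≤ (nu r : ℤ) := by rw [hnur]; omega
          exact_mod_cast this
    · have hz : cnt r = 0 := by
        simp only [hcnt]
        rw [Finset.card_eq_zero, Finset.not_nonempty_iff_eq_empty] at *
        exact hne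
      have hnur : nu r = lam r := by simp [hnu, hz]
      constructor
      · intro h; exact Or.inl (hnur ▸ h)
      · rintro (h | ⟨k, hka, hkb, hMk, hck⟩)
        · rw [hnur]; exact h
        · exfalso
          apply hne
          refine ⟨k, ?_⟩
          simp only [Finset.mem_filter, Finset.mem_Icc]
          exact ⟨⟨hka, hkb⟩, by exact_mod_cast hMk⟩
  -- nu is a partition
  have hcnt_hi : ∀ r : ℕ, m < r → cnt r = 0 := by
    intro r hr
    simp only [hcnt]
    rw [Finset.card_eq_zero, Finset.eq_empty_iff_forall_notMem]
    intro k hk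
    simp only [Finset.mem_filter, Finset.mem_Icc] at hk
    have := hMub k hk.1.1 hk.1.2
    have h2 := hk.2
    omega
  have hnu_zero : ∀ r : ℕ, m < r → nu r = 0 := by
    intro r hr
    simp [hnu, hcnt_hi r hr, hlam.1.2.2 r hr]
  have hcnt_one : cnt 1 = 0 := by
    simp only [hcnt]
    rw [Finset.card_eq_zero, Finset.eq_empty_iff_forall_notMem]
    intro k hk
    simp only [Finset.mem_filter, Finset.mem_Icc] at hk
    have := hMpos k hk.1.1 hk.1.2
    omega
  have hnu_one : nu 1 ≤ m := by
    have : nu 1 = lam 1 := by simp [hnu, hcnt_one]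
    rw [this]
    exact hlam.1.2.1
  have hnu_adj : ∀ r : ℕ, 1 ≤ r → nu (r + 1) ≤ nu r := by
    intro r hr
    by_cases hne : ((Finset.Icc a b).filter fun k => Mf m lam k + 1 = (r+1)).Nonempty
    · obtain ⟨k1', k2', hk1a', hk12', hk2b', hr1', hrm', hiff', hMk1', hlamr', hcard'⟩ :=
        row_struct hlam hab ham hbm hZb (r+1) hne
      have hnur' : (nu (r+1) : ℤ) = (r : ℤ) + 1 - k1' := by
        have e1 : ((cnt (r+1) : ℕ) : ℤ) = k2' - k1' + 1 := by simp only [hcnt]; exact hcard'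
        have e2 : (nu (r+1) : ℤ) = (lam (r+1) : ℤ) + (cnt (r+1) : ℤ) := by
          simp only [hnu]; push_cast; ring
        push_cast at hlamr'
        omega
      have hMk1'' : Mf m lam k1' = r := by omega
      rcases eq_or_lt_of_le hk1a' with heq | hlt
      · -- k1' = a
        have hMa : Mf m lam a = r := by rw [heq]; exact hMk1''
        have h2r : 2 * (r : ℤ) = (m : ℤ) + a := by
          rw [← hZa, hMa]
        have hregb := reg_bound hlam (a - 1) (by omega) (by omega)
        have hMa1 : (r : ℕ) ≤ Mf m lam (a - 1) := by
          have : (r : ℤ) ≤ Mf m lam (a - 1) := by omega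
          exact_mod_cast this
        have hrm2 : r ≤ m := by
          have := hMub a (le_refl a) hab
          rw [hMa] at this
          omega
        have hr1 : 1 ≤ r := by
          have := hMpos a (le_refl a) hab
          omega
        have hlr : -(a - 1) ≤ (lam r : ℤ) - r :=
          (mem_Mf hlam.1 r hr1 hrm2 (a - 1)).mp hMa1
        have : (nu (r+1) : ℤ) ≤ (lam r : ℤ) := by
          rw [hnur', ← heq]
          omega
        have h2 : (lam r : ℤ) ≤ nu r := by exact_mod_cast hlamle r
        have : (nu (r+1) : ℤ) ≤ (nu r : ℤ) := le_trans this h2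
        exact_mod_cast this
      · -- a < k1'
        have hstep := Mf_step hlam.1 (k1' - 1)
        have hee : k1' - 1 + 1 = k1' := by ring
        rw [hee] at hstep
        have hmono : Mf m lam (k1' - 1) ≤ Mf m lam k1' := Mf_mono m lam (by omega)
        have hcases : Mf m lam (k1' - 1) + 1 = r ∨ Mf m lam (k1' - 1) = r := by omega
        rcases hcases with hA | hB
        swap
        · exfalso
          have : k1' - 1 ∈ (Finset.Icc a b).filter fun k => Mf m lam k + 1 = (r+1) := by
            simp only [Finset.mem_filter, Finset.mem_Icc]
            exact ⟨⟨by omega, by omega⟩, by omega⟩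
          have := ((hiff' _).mp this).1
          omega
        · have hneF : ((Finset.Icc a b).filter fun k => Mf m lam k + 1 = r).Nonempty := by
            refine ⟨k1' - 1, ?_⟩
            simp only [Finset.mem_filter, Finset.mem_Icc]
            exact ⟨⟨by omega, by omega⟩, hA⟩
          obtain ⟨k1, k2, hk1a, hk12, hk2b, hr1, hrm, hiff, hMk1, hlamr, hcard⟩ :=
            row_struct hlam hab ham hbm hZb r hneF
          have hnur : (nu r : ℤ) = (r : ℤ) - k1 := by
            have e1 : ((cnt r : ℕ) : ℤ) = k2 - k1 + 1 := by simp only [hcnt]; exact hcard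
            have e2 : (nu r : ℤ) = (lam r : ℤ) + (cnt r : ℤ) := by
              simp only [hnu]; push_cast; ring
            omega
          have hk1le : k1 ≤ k1' - 1 := by
            have : k1' - 1 ∈ (Finset.Icc a b).filter fun k => Mf m lam k + 1 = r := by
              simp only [Finset.mem_filter, Finset.mem_Icc]
              exact ⟨⟨by omega, by omega⟩, hA⟩
            exact ((hiff _).mp this).1
          have : (nu (r+1) : ℤ) ≤ (nu r : ℤ) := by
            rw [hnur, hnur']
            omega
          exact_mod_cast this
    · have hz : cnt (r+1) = 0 := by
        simp only [hcnt]
        rw [Finset.card_eq_zero, Finset.not_nonempty_iff_eq_empty] at *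
        exact hne
      have : nu (r+1) = lam (r+1) := by simp [hnu, hz]
      rw [this]
      exact le_trans (hlam.1.1 r (r+1) hr (by omega)) (hlamle r)
  have hnu_anti : ∀ i j : ℕ, 1 ≤ i → i ≤ j → nu j ≤ nu i := by
    intro i j h1 hij
    obtain ⟨d, rfl⟩ := Nat.exists_eq_add_of_le hij
    clear hij
    induction d with
    | zero => simp
    | succ n ih =>
        have h2 := hnu_adj (i + n) (by omega)
        have he : i + (n + 1) = (i + n) + 1 := by omega
        rw [he]
        exact le_trans h2 ih
  have hptnnu : IsPtn m m nu := ⟨hnu_anti, hnu_one, hnu_zero⟩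
  have hregnu : Regular m m nu := by
    refine ⟨hptnnu, ⟨?_, ?_⟩⟩
    · intro i h1 h2
      exact le_trans (hlam.2.1 i h1 h2) (hlamle i)
    · intro hs
      have := hs 1 le_rfl (by omega)
      have h2 : m + 1 + 1 - 1 = m + 1 := by omega
      rw [h2] at this
      omega
  exact ⟨nu, hregnu, construct_rep hlam hab ham hbm hZa hZb nu hlamle mem_nu⟩

end Stmt18

/-- In the presented algebra `A_{m,m}` (generators `1_λ`, `D^λ_μ`, `D^μ_λ` for
`λ = μ - P` with `P ∈ DRem_{>0}(μ)`, and degree-2 loops `L^λ_λ` for `λ` regular, subject to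
the idempotent, self-dual, commuting, non-commuting, adjacent, cubic and loop relations;
quantified over an arbitrary algebra with elements satisfying those relations), for `λ`
regular and any `P ∈ DRem_0(λ)`, the generalized loop element squares to zero:
`L^λ_λ(-P)² = 0`. -/
theorem stmt18 (m : ℕ)
    {A : Type*} [Ring A]
    (e : (ℕ → ℕ) → A) (D : (ℕ → ℕ) → (ℕ → ℕ) → A) (Lo : (ℕ → ℕ) → A)
    (L : (ℕ → ℕ) → ℤ × ℤ → A)
    -- definition of the generalized loop elements, positive-height case
    (hLpos : ∀ lam nu (Q : ℤ × ℤ) (h : ℤ), Regular m m lam → Regular m m nu →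
      0 < h → RemovesH m m lam Q.1 Q.2 h nu →
      L lam Q = (-1 : A) ^ brN Q * (D lam nu * D nu lam))
    -- height-zero case, rightmost removable Dyck path (`last(Q) = m - 1`)
    (hLlast : ∀ lam (Q : ℤ × ℤ), Regular m m lam → DRemH m m lam Q.1 Q.2 0 →
      Q.2 = (m : ℤ) - 1 → L lam Q = Lo lam)
    -- height-zero case, `last(Q) ≠ m - 1`
    (hLzero : ∀ lam nu (Q R : ℤ × ℤ), Regular m m lam → Regular m m nu →
      DRemH m m lam Q.1 Q.2 0 → Q.2 ≠ (m : ℤ) - 1 → IsRt m m lam Q R →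
      RemovesH m m nu R.1 R.2 1 lam →
      L lam Q = -(Lo lam) + (-1 : A) ^ (brN R + 1) * (D lam nu * D nu lam))
    -- the idempotent relations
    (hidem : ∀ lam, Regular m m lam → e lam * e lam = e lam)
    (horth : ∀ lam mu, Regular m m lam → Regular m m mu → lam ≠ mu → e mu * e lam = 0)
    (hunit : ∀ lam mu (P : ℤ × ℤ), Regular m m lam → Regular m m mu →
      Removes m m mu P.1 P.2 lam →
      e lam * D lam mu = D lam mu ∧ D lam mu * e mu = D lam mu ∧
      e mu * D mu lam = D mu lam ∧ D mu lam * e lam = D mu lam)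
    (hloopunit : ∀ lam, Regular m m lam → e lam * Lo lam * e lam = Lo lam)
    -- the self-dual relation
    (hself : ∀ lam nu (P : ℤ × ℤ), Regular m m lam → Regular m m nu →
      Removes m m nu P.1 P.2 lam →
      D lam nu * D nu lam =
        (-1 : A) ^ (brN P - 1) *
          (2 * (∑ᶠ Q ∈ {Q : ℤ × ℤ | DRem m m lam Q.1 Q.2 ∧ DyckLt P Q}, L lam Q) +
            ∑ᶠ Q ∈ {Q : ℤ × ℤ | DRem m m lam Q.1 Q.2 ∧ DyckAdj Q P}, L lam Q))
    -- the commuting relations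
    (hcommrel : ∀ mu nuP nuQ rho (P Q : ℤ × ℤ),
      Regular m m mu → Regular m m nuP → Regular m m nuQ → Regular m m rho →
      Removes m m mu P.1 P.2 nuP → Removes m m mu Q.1 Q.2 nuQ →
      Removes m m nuP Q.1 Q.2 rho → Removes m m nuQ P.1 P.2 rho →
      D rho nuP * D nuP mu = D rho nuQ * D nuQ mu ∧
      D nuP mu * D mu nuQ = D nuP rho * D rho nuQ)
    -- the non-commuting relation
    (hnoncomm : ∀ mu nuP nuQ rho1 rho2 (P Q : ℤ × ℤ),
      Regular m m mu → Regular m m nuP → Regular m m nuQ →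
      Regular m m rho1 → Regular m m rho2 →
      Removes m m mu P.1 P.2 nuP → Removes m m mu Q.1 Q.2 nuQ →
      DyckLt P Q → ¬ DyckCommute m m mu P Q →
      Removes m m nuP Q.1 (P.1 - 1) rho1 → Removes m m rho1 (P.2 + 1) Q.2 nuQ →
      Removes m m nuP (P.2 + 1) Q.2 rho2 → Removes m m rho2 Q.1 (P.1 - 1) nuQ →
      D nuQ mu * D mu nuP = D nuQ rho1 * D rho1 nuP ∧
      D nuQ mu * D mu nuP = D nuQ rho2 * D rho2 nuP)
    -- the adjacent relation
    (hadjrel : ∀ mu nuP rho (P Q : ℤ × ℤ),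
      Regular m m mu → Regular m m nuP → Regular m m rho →
      Removes m m mu P.1 P.2 nuP → Removes m m nuP Q.1 Q.2 rho → DyckAdj P Q →
      (∀ R nuR, IsMerge m m mu P Q R → Regular m m nuR → Removes m m mu R.1 R.2 nuR →
        D rho nuP * D nuP mu = (-1 : A) ^ (brN R - brN Q) * (D rho nuR * D nuR mu)) ∧
      ((¬ ∃ R : ℤ × ℤ, IsMerge m m mu P Q R) → D rho nuP * D nuP mu = 0))
    -- the cubic relation (case `m = n`)
    (hcubic : ∀ mu nu (P : ℤ × ℤ), Regular m m mu → Regular m m nu →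
      DAddH m m mu P.1 P.2 1 → (∀ P' : ℤ × ℤ, DAddH m m mu P'.1 P'.2 1 → P'.2 ≤ P.2) →
      RemovesH m m nu P.1 P.2 1 mu →
      D nu mu * D mu nu * D nu mu = (-1 : A) ^ (brN P + 1) * (2 * (Lo nu * D nu mu)))
    -- the loop-nilpotency and loop-commutation relations
    (hloopsq : ∀ lam, Regular m m lam → Lo lam * Lo lam = 0)
    (hloopcomm : ∀ lam mu (P : ℤ × ℤ), Regular m m lam → Regular m m mu →
      Removes m m mu P.1 P.2 lam →
      D lam mu * Lo mu = Lo lam * D lam mu ∧ D mu lam * Lo lam = Lo mu * D mu lam)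
    -- the configuration: `λ` regular, `P ∈ DRem_0(λ)`
    (lam : ℕ → ℕ) (P : ℤ × ℤ)
    (hlam : Regular m m lam) (hP : DRemH m m lam P.1 P.2 0) :
    L lam P * L lam P = 0 := by
  classical
  by_cases hP2 : P.2 = (m : ℤ) - 1
  · rw [hLlast lam P hlam hP hP2]
    exact hloopsq lam hlam
  · obtain ⟨hl_lb, hl_ub, hZa0⟩ := Stmt18.rem0_last hlam hP
    set a : ℤ := P.2 + 1 with hadef
    have hZa : 2 * (Stmt18.Mf m lam a : ℤ) = m + a := by omega
    have ham : 2 - (m : ℤ) ≤ a := by omega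
    have haub : a ≤ (m : ℤ) - 2 := by omega
    set T := (Finset.Icc a ((m : ℤ) - 1)).filter
      (fun k => 2 * (Stmt18.Mf m lam k : ℤ) = m + k) with hT
    have haT : a ∈ T := by
      simp only [hT, Finset.mem_filter, Finset.mem_Icc]
      exact ⟨⟨le_rfl, by omega⟩, hZa⟩
    have hTne : T.Nonempty := ⟨a, haT⟩
    set b := T.max' hTne with hbdef
    have hbT : b ∈ T := T.max'_mem hTne
    have hbT' : (a ≤ b ∧ b ≤ (m : ℤ) - 1) ∧ 2 * (Stmt18.Mf m lam b : ℤ) = m + b := by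
      simpa [hT, Finset.mem_filter, Finset.mem_Icc] using hbT
    have hab : a ≤ b := hbT'.1.1
    have hZb : 2 * (Stmt18.Mf m lam b : ℤ) = m + b := hbT'.2
    have hbm : b ≤ (m : ℤ) - 2 := by
      have := hbT'.1.2
      omega
    have hmaxT : ∀ k : ℤ, a ≤ k → k ≤ (m : ℤ) - 1 →
        2 * (Stmt18.Mf m lam k : ℤ) = m + k → k ≤ b := by
      intro k h1 h2 h3
      apply T.le_max' k
      simp only [hT, Finset.mem_filter, Finset.mem_Icc]
      exact ⟨⟨h1, h2⟩, h3⟩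
    obtain ⟨nu, hregnu, hrem⟩ := Stmt18.construct hlam hab ham hbm hZa hZb
    set R : ℤ × ℤ := (a, b) with hRdef
    have hDAdd : DAddH m m lam a b 1 := ⟨nu, hregnu.1, hrem⟩
    have hmaxall : ∀ P' : ℤ × ℤ, DAddH m m lam P'.1 P'.2 1 → P'.2 ≤ b := by
      intro P' h'
      obtain ⟨h1, h2, h3⟩ := Stmt18.add1_last hlam h'
      rcases le_or_gt a P'.2 with hc | hc
      · exact hmaxT P'.2 hc h2 h3
      · omega
    have hIsRt : IsRt m m lam P R := by
      refine ⟨hDAdd, by show P.2 < a; omega, ?_⟩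
      intro R' h' hgt
      obtain ⟨h1, h2, h3⟩ := Stmt18.add1_last hlam h'
      have hb' : R'.2 ≤ b := hmaxall R' h'
      have ha' : a ≤ R'.1 := by omega
      show brN R' ≤ brN R
      simp only [brN]
      apply Int.toNat_le_toNat
      have hdiv : (R'.2 - R'.1) / 2 ≤ (R.2 - R.1) / 2 := by
        apply Int.ediv_le_ediv (by norm_num)
        show R'.2 - R'.1 ≤ b - a
        omega
      omega
    have hrem' : RemovesH m m nu R.1 R.2 1 lam := hrem
    have hLeq := hLzero lam nu P R hlam hregnu hP hP2 hIsRt hrem'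
    have hcub := hcubic lam nu R hlam hregnu hDAdd
      (fun P' h' => hmaxall P' h') hrem'
    obtain ⟨hcm1, hcm2⟩ := hloopcomm lam nu R hlam hregnu ⟨1, hrem'⟩
    have hLo := hloopsq lam hlam
    -- algebra
    set c : A := (-1 : A) ^ (brN R + 1) with hcdef
    set X := D lam nu with hX
    set Y := D nu lam with hY
    set Λ := Lo lam with hΛ
    set N := Lo nu with hN
    have hcomm : ∀ x : A, c * x = x * c := by
      intro x
      exact ((Commute.neg_one_left x).pow_left _).eq
    have hmove : ∀ x y : A, x * (c * y) = c * (x * y) := by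
      intro x y
      rw [← mul_assoc, ← hcomm x, mul_assoc]
    have hcc : ∀ t : A, c * (c * t) = t := by
      intro t
      rw [← mul_assoc, hcdef, ← pow_add]
      have he : Even (brN R + 1 + (brN R + 1)) := ⟨brN R + 1, rfl⟩
      rw [he.neg_one_pow, one_mul]
    have hXYXY : (X * Y) * (X * Y) = c * (2 * (Λ * (X * Y))) := by
      have h1 : (X * Y) * (X * Y) = X * (Y * X * Y) := by noncomm_ring
      rw [h1, hcub, hmove]
      congr 1
      have h2 : X * (2 * (N * Y)) = 2 * ((X * N) * Y) := by noncomm_ring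
      rw [h2, hcm1]
      noncomm_ring
    have hXYL : (X * Y) * Λ = Λ * (X * Y) := by
      have h1 : (X * Y) * Λ = X * (Y * Λ) := by noncomm_ring
      rw [h1, hcm2]
      have h2 : X * (N * Y) = (X * N) * Y := by noncomm_ring
      rw [h2, hcm1]
      noncomm_ring
    rw [hLeq]
    have hexp : (-Λ + c * (X * Y)) * (-Λ + c * (X * Y)) =
        Λ * Λ - Λ * (c * (X * Y)) - (c * (X * Y)) * Λ + (c * (X * Y)) * (c * (X * Y)) := by
      noncomm_ring
    rw [hexp, hLo]
    have e1 : Λ * (c * (X * Y)) = c * (Λ * (X * Y)) := hmove Λ _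
    have e2 : (c * (X * Y)) * Λ = c * (Λ * (X * Y)) := by
      rw [mul_assoc, hXYL]
    have e3 : (c * (X * Y)) * (c * (X * Y)) = c * (2 * (Λ * (X * Y))) := by
      rw [mul_assoc, hmove (X * Y), hXYXY, hcc]
    rw [e1, e2, e3]
    noncomm_ring
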